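/- arXiv:1709.09274 — 2 statements merged into one kernel-verified Lean document; each statement's English description precedes it below -/
import Mathlib

section
/- Pinsker's inequality (finite form): for any two probability mass functions P and Q on a finite set X, the total variation distance satisfies sup_{A ⊆ X} |P(A) − Q(A)| ≤ sqrt( D_KL(P‖Q) / 2 ). -/
open Real Finset


/-- p = 0 case of binary Pinsker. -/
lemma pinsker_zero (q : ℝ) (hq0 : 0 ≤ q) (hq1 : q < 1) :
    2 * q ^ 2 ≤ -Real.log (1 - q) := by
  set F : ℝ → ℝ := fun t => -Real.log (1 - t) - 2 * t ^ 2 with hF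
  have key : ∀ t : ℝ, t < 1 → HasDerivAt F (1 / (1 - t) - 4 * t) t := by
    intro t ht1
    have h1 : (1 : ℝ) - t ≠ 0 := by linarith
    have d1 : HasDerivAt (fun s : ℝ => 1 - s) (-1) t := by
      simpa using (hasDerivAt_id t).const_sub 1
    have d2 : HasDerivAt (fun s : ℝ => Real.log (1 - s)) ((1 - t)⁻¹ * (-1)) t :=
      (Real.hasDerivAt_log h1).comp t d1
    have d3 : HasDerivAt (fun s : ℝ => 2 * s ^ 2) (2 * (2 * t ^ 1)) t :=
      (hasDerivAt_pow 2 t).const_mul 2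
    have := (d2.neg).sub d3
    exact this.congr_deriv (by rw [one_div]; ring)
  have cont : ContinuousOn F (Set.Icc 0 q) := by
    intro t ht
    exact ((key t (lt_of_le_of_lt ht.2 hq1)).differentiableAt.continuousAt).continuousWithinAt
  have mono : MonotoneOn F (Set.Icc 0 q) := by
    apply monotoneOn_of_deriv_nonneg (convex_Icc 0 q) cont
    · intro t ht
      rw [interior_Icc] at ht
      exact ((key t (lt_of_lt_of_le ht.2 (le_of_lt hq1))).differentiableAt).differentiableWithinAt
    · intro t ht
      rw [interior_Icc] at ht
      have ht1 : t < 1 := lt_of_lt_of_le ht.2 (le_of_lt hq1)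
      rw [(key t ht1).deriv]
      have h1 : (0:ℝ) < 1 - t := by linarith
      rw [sub_nonneg, le_div_iff₀ h1]
      nlinarith [sq_nonneg (1 - 2 * t), ht.1.le]
  have h0q : (0:ℝ) ∈ Set.Icc (0:ℝ) q := Set.mem_Icc.2 ⟨le_refl 0, hq0⟩
  have hqq : q ∈ Set.Icc (0:ℝ) q := Set.mem_Icc.2 ⟨hq0, le_refl q⟩
  have := mono h0q hqq hq0
  simp only [hF] at this
  simp only [sub_zero, Real.log_one, neg_zero, mul_zero] at this
  nlinarith [this]

/-- interior case p ≤ q of binary Pinsker. -/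
lemma pinsker_core (p q : ℝ) (hp : 0 < p) (hpq : p ≤ q) (hq : q < 1) :
    2 * (p - q) ^ 2 ≤
      p * (Real.log p - Real.log q) + (1 - p) * (Real.log (1 - p) - Real.log (1 - q)) := by
  set F : ℝ → ℝ := fun t =>
    p * (Real.log p - Real.log t) + (1 - p) * (Real.log (1 - p) - Real.log (1 - t))
      - 2 * (p - t) ^ 2 with hF
  have key : ∀ t : ℝ, 0 < t → t < 1 →
      HasDerivAt F (-(p / t) + (1 - p) / (1 - t) + 4 * (p - t)) t := by
    intro t ht0 ht1
    have h1 : (1 : ℝ) - t ≠ 0 := by linarith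
    have d1 : HasDerivAt (fun s : ℝ => p * (Real.log p - Real.log s)) (p * -t⁻¹) t :=
      ((Real.hasDerivAt_log ht0.ne').const_sub (Real.log p)).const_mul p
    have dlin : HasDerivAt (fun s : ℝ => 1 - s) (-1) t := by
      simpa using (hasDerivAt_id t).const_sub 1
    have d2' : HasDerivAt (fun s : ℝ => Real.log (1 - s)) ((1 - t)⁻¹ * (-1)) t :=
      (Real.hasDerivAt_log h1).comp t dlin
    have d2 : HasDerivAt (fun s : ℝ => (1 - p) * (Real.log (1 - p) - Real.log (1 - s)))
        ((1 - p) * -((1 - t)⁻¹ * (-1))) t := (d2'.const_sub (Real.log (1 - p))).const_mul (1 - p)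
    have dq : HasDerivAt (fun s : ℝ => p - s) (-1) t := by
      simpa using (hasDerivAt_id t).const_sub p
    have d3 : HasDerivAt (fun s : ℝ => 2 * (p - s) ^ 2) (2 * ((2 * (p - t) ^ 1) * (-1))) t :=
      (dq.pow 2).const_mul 2
    have := (d1.add d2).sub d3
    have ht0' : t ≠ 0 := ht0.ne'
    exact this.congr_deriv (by field_simp; ring)
  have cont : ContinuousOn F (Set.Icc p q) := by
    intro t ht
    have ht0 : 0 < t := lt_of_lt_of_le hp ht.1
    have ht1 : t < 1 := lt_of_le_of_lt ht.2 hq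
    exact ((key t ht0 ht1).differentiableAt.continuousAt).continuousWithinAt
  have mono : MonotoneOn F (Set.Icc p q) := by
    apply monotoneOn_of_deriv_nonneg (convex_Icc p q) cont
    · intro t ht
      rw [interior_Icc] at ht
      have ht0 : 0 < t := lt_of_lt_of_le hp ht.1.le
      have ht1 : t < 1 := lt_of_lt_of_le ht.2 hq.le
      exact ((key t ht0 ht1).differentiableAt).differentiableWithinAt
    · intro t ht
      rw [interior_Icc] at ht
      have ht0 : 0 < t := lt_of_lt_of_le hp ht.1.le
      have ht1 : t < 1 := lt_of_lt_of_le ht.2 hq.le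
      rw [(key t ht0 ht1).deriv]
      have h1 : (0:ℝ) < 1 - t := by linarith
      have heq : -(p / t) + (1 - p) / (1 - t) + 4 * (p - t)
          = ((t - p) * (1 - 2 * t) ^ 2) / (t * (1 - t)) := by
        field_simp
        ring
      rw [heq]
      apply div_nonneg
      · nlinarith [sq_nonneg (1 - 2 * t), ht.1.le]
      · positivity
  have hpp : p ∈ Set.Icc p q := Set.mem_Icc.2 ⟨le_refl p, hpq⟩
  have hqq : q ∈ Set.Icc p q := Set.mem_Icc.2 ⟨hpq, le_refl q⟩
  have := mono hpp hqq hpq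
  simp only [hF, sub_self, mul_zero, zero_add, zero_sub, neg_zero] at this
  nlinarith [this]

/-- binary Pinsker, p ≤ q version with endpoints. -/
lemma pinsker_le_ver (p q : ℝ) (hp0 : 0 ≤ p) (hpq : p ≤ q) (hq1 : q ≤ 1)
    (h1 : p < 1 → q < 1) :
    2 * (p - q) ^ 2 ≤
      p * (Real.log p - Real.log q) + (1 - p) * (Real.log (1 - p) - Real.log (1 - q)) := by
  rcases eq_or_lt_of_le hq1 with hq | hq
  · -- q = 1, so p = 1
    have hp1 : p = 1 := by
      by_contra h
      have := h1 (lt_of_le_of_ne (le_trans hpq hq1) h)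
      linarith
    subst hp1; subst hq
    norm_num
  · rcases eq_or_lt_of_le hp0 with hp | hp
    · -- p = 0
      have hq0' : (0:ℝ) ≤ q := hp ▸ hpq
      have h := pinsker_zero q hq0' hq
      rw [← hp]
      simp only [zero_mul, zero_add, sub_zero, Real.log_one, one_mul, zero_sub]
      nlinarith [h]
    · exact pinsker_core p q hp hpq hq


/-- binary Pinsker, full version. -/
lemma pinsker_binary (p q : ℝ) (hp0 : 0 ≤ p) (hp1 : p ≤ 1) (hq0 : 0 ≤ q) (hq1 : q ≤ 1)
    (hA : 0 < p → 0 < q) (hB : p < 1 → q < 1) :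
    2 * (p - q) ^ 2 ≤
      p * (Real.log p - Real.log q) + (1 - p) * (Real.log (1 - p) - Real.log (1 - q)) := by
  rcases le_or_gt p q with h | h
  · exact pinsker_le_ver p q hp0 h hq1 hB
  · have key := pinsker_le_ver (1 - p) (1 - q) (by linarith) (by linarith) (by linarith)
      (fun hh => by have := hA (by linarith); linarith)
    have e1 : (1:ℝ) - (1 - p) = p := by ring
    have e2 : (1:ℝ) - (1 - q) = q := by ring
    rw [e1, e2] at key
    nlinarith [key]

/-- Log-sum inequality. -/
lemma log_sum_ineq {X : Type*} (S : Finset X) (a b : X → ℝ)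
    (ha : ∀ x ∈ S, 0 ≤ a x) (hb : ∀ x ∈ S, 0 < b x) :
    (∑ x ∈ S, a x) * (Real.log (∑ x ∈ S, a x) - Real.log (∑ x ∈ S, b x)) ≤
      ∑ x ∈ S, a x * (Real.log (a x) - Real.log (b x)) := by
  rcases S.eq_empty_or_nonempty with rfl | hS
  · simp
  set A := ∑ x ∈ S, a x with hA
  set B := ∑ x ∈ S, b x with hB
  have hBpos : 0 < B := Finset.sum_pos hb hS
  have hAnn : 0 ≤ A := Finset.sum_nonneg ha
  rcases eq_or_lt_of_le hAnn with hA0 | hApos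
  · -- A = 0 : every a x = 0
    have hall : ∀ x ∈ S, a x = 0 := by
      intro x hx
      have := (Finset.sum_eq_zero_iff_of_nonneg ha).1 hA0.symm
      exact this x hx
    rw [← hA0]
    simp only [zero_mul]
    apply Finset.sum_nonneg
    intro x hx
    rw [hall x hx]
    simp
  · -- Jensen with weights b x / B and points a x / b x
    have jensen := Real.convexOn_mul_log.map_sum_le (t := S)
      (w := fun x => b x / B) (p := fun x => a x / b x)
      (fun x hx => div_nonneg (hb x hx).le hBpos.le)
      (by rw [← Finset.sum_div, ← hB, div_self hBpos.ne'])
      (fun x hx => Set.mem_Ici.2 (div_nonneg (ha x hx) (hb x hx).le))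
    simp only [smul_eq_mul] at jensen
    have e1 : ∑ x ∈ S, b x / B * (a x / b x) = A / B := by
      rw [hA, Finset.sum_div]
      apply Finset.sum_congr rfl
      intro x hx
      have h1 : b x ≠ 0 := (hb x hx).ne'
      have h2 : B ≠ 0 := hBpos.ne'
      field_simp
    rw [e1] at jensen
    have e2 : ∑ x ∈ S, b x / B * (a x / b x * Real.log (a x / b x))
        = (∑ x ∈ S, a x * (Real.log (a x) - Real.log (b x))) / B := by
      rw [Finset.sum_div]
      apply Finset.sum_congr rfl
      intro x hx
      rcases eq_or_lt_of_le (ha x hx) with h0 | h0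
      · rw [← h0]; simp
      · have h1 : b x ≠ 0 := (hb x hx).ne'
        have h2 : B ≠ 0 := hBpos.ne'
        rw [Real.log_div h0.ne' h1]
        field_simp
    rw [e2] at jensen
    have e3 : A / B * Real.log (A / B) = A * (Real.log A - Real.log B) / B := by
      rw [Real.log_div hApos.ne' hBpos.ne']
      ring
    rw [e3] at jensen
    calc A * (Real.log A - Real.log B)
        = A * (Real.log A - Real.log B) / B * B := by field_simp
      _ ≤ (∑ x ∈ S, a x * (Real.log (a x) - Real.log (b x))) / B * B := by
          exact mul_le_mul_of_nonneg_right jensen hBpos.le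
      _ = ∑ x ∈ S, a x * (Real.log (a x) - Real.log (b x)) := by field_simp


/-- Bound for one part of the partition. -/
lemma part_bound {X : Type*} [Fintype X] [DecidableEq X] (P Q : X → ℝ)
    (hP0 : ∀ x, 0 ≤ P x) (hQ0 : ∀ x, 0 ≤ Q x) (hac : ∀ x, 0 < P x → 0 < Q x)
    (B : Finset X) [DecidablePred (fun x => 0 < P x)] :
    (∑ x ∈ B, P x) * (Real.log (∑ x ∈ B, P x) - Real.log (∑ x ∈ B, Q x)) ≤
      ∑ x ∈ B.filter (fun x => 0 < P x), P x * Real.log (P x / Q x) := by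
  set S := B.filter (fun x => 0 < P x) with hS
  have hsub : S ⊆ B := Finset.filter_subset _ _
  have hpS : ∑ x ∈ S, P x = ∑ x ∈ B, P x := by
    apply Finset.sum_subset hsub
    intro x hx hnx
    have : ¬ (0 < P x) := by
      intro h
      exact hnx (Finset.mem_filter.2 ⟨hx, h⟩)
    linarith [hP0 x]
  have hPpos : ∀ x ∈ S, 0 < P x := fun x hx => (Finset.mem_filter.1 hx).2
  have hQpos : ∀ x ∈ S, 0 < Q x := fun x hx => hac x (hPpos x hx)
  have hrw : ∑ x ∈ S, P x * (Real.log (P x) - Real.log (Q x))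
      = ∑ x ∈ S, P x * Real.log (P x / Q x) := by
    apply Finset.sum_congr rfl
    intro x hx
    rw [Real.log_div (hPpos x hx).ne' (hQpos x hx).ne']
  rcases eq_or_lt_of_le (Finset.sum_nonneg (fun x (_ : x ∈ B) => hP0 x)) with h0 | h0
  · -- total P mass on B is zero
    have hSempty : S = ∅ := by
      by_contra h
      obtain ⟨x, hx⟩ := Finset.nonempty_iff_ne_empty.2 h
      have h1 : P x ≤ ∑ y ∈ B, P y :=
        Finset.single_le_sum (fun y (_ : y ∈ B) => hP0 y) (hsub hx)
      have := hPpos x hx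
      linarith
    rw [hSempty, ← h0]
    simp
  · -- positive mass
    have hSne : S.Nonempty := by
      rw [Finset.nonempty_iff_ne_empty]
      intro h
      rw [h] at hpS
      simp at hpS
      linarith
    have hq1pos : 0 < ∑ x ∈ S, Q x := Finset.sum_pos hQpos hSne
    have hq1le : ∑ x ∈ S, Q x ≤ ∑ x ∈ B, Q x :=
      Finset.sum_le_sum_of_subset_of_nonneg hsub (fun x _ _ => hQ0 x)
    have hlog : Real.log (∑ x ∈ S, Q x) ≤ Real.log (∑ x ∈ B, Q x) :=
      Real.log_le_log hq1pos hq1le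
    have step1 : (∑ x ∈ B, P x) * (Real.log (∑ x ∈ B, P x) - Real.log (∑ x ∈ B, Q x))
        ≤ (∑ x ∈ B, P x) * (Real.log (∑ x ∈ B, P x) - Real.log (∑ x ∈ S, Q x)) := by
      apply mul_le_mul_of_nonneg_left _ h0.le
      linarith
    have step2 := log_sum_ineq S P Q (fun x _ => hP0 x) hQpos
    rw [hpS, hrw] at step2
    linarith



/-- **Pinsker's inequality (finite form).** For any two probability mass functions
`P` and `Q` on a finite set `X` (with `Q x > 0` whenever `P x > 0`), the total
variation distance satisfies `sup_{A ⊆ X} |P(A) − Q(A)| ≤ sqrt(D_KL(P‖Q) / 2)`,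
where `D_KL(P‖Q) = Σ_{x : P x > 0} P x * log (P x / Q x)`. -/
theorem pinsker_inequality_finite {X : Type*} [Fintype X] (P Q : X → ℝ)
    (hP0 : ∀ x, 0 ≤ P x) (hQ0 : ∀ x, 0 ≤ Q x)
    (hP1 : ∑ x, P x = 1) (hQ1 : ∑ x, Q x = 1)
    (hac : ∀ x, 0 < P x → 0 < Q x) :
    ∀ A : Finset X,
      |(∑ x ∈ A, P x) - (∑ x ∈ A, Q x)| ≤
        Real.sqrt
          ((∑ x ∈ Finset.univ.filter (fun x => 0 < P x),
              P x * Real.log (P x / Q x)) / 2) := by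
  classical
  intro A
  set p := ∑ x ∈ A, P x with hp
  set q := ∑ x ∈ A, Q x with hq
  set D := ∑ x ∈ Finset.univ.filter (fun x => 0 < P x), P x * Real.log (P x / Q x) with hD
  have hPc : ∑ x ∈ Aᶜ, P x = 1 - p := by
    have := Finset.sum_add_sum_compl A P
    rw [hP1] at this
    linarith
  have hQc : ∑ x ∈ Aᶜ, Q x = 1 - q := by
    have := Finset.sum_add_sum_compl A Q
    rw [hQ1] at this
    linarith
  have hp0' : 0 ≤ p := Finset.sum_nonneg (fun x _ => hP0 x)
  have hq0' : 0 ≤ q := Finset.sum_nonneg (fun x _ => hQ0 x)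
  have hp1' : p ≤ 1 := by
    have := Finset.sum_nonneg (fun x (_ : x ∈ Aᶜ) => hP0 x)
    linarith [hPc]
  have hq1' : q ≤ 1 := by
    have := Finset.sum_nonneg (fun x (_ : x ∈ Aᶜ) => hQ0 x)
    linarith [hQc]
  -- split D over the partition A, Aᶜ
  have hDsplit : D = (∑ x ∈ A.filter (fun x => 0 < P x), P x * Real.log (P x / Q x))
      + (∑ x ∈ Aᶜ.filter (fun x => 0 < P x), P x * Real.log (P x / Q x)) := by
    rw [hD, Finset.sum_filter, Finset.sum_filter, Finset.sum_filter]
    exact (Finset.sum_add_sum_compl A _).symm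
  have key1 := part_bound P Q hP0 hQ0 hac A
  have key2 := part_bound P Q hP0 hQ0 hac Aᶜ
  rw [hPc, hQc] at key2
  -- binary hypotheses
  have hA' : 0 < p → 0 < q := by
    intro hppos
    have hex : ∃ x ∈ A, 0 < P x := by
      by_contra h
      push_neg at h
      have : p = 0 := Finset.sum_eq_zero (fun x hx => le_antisymm (h x hx) (hP0 x))
      linarith
    obtain ⟨x, hxA, hxP⟩ := hex
    have := Finset.single_le_sum (fun y (_ : y ∈ A) => hQ0 y) hxA
    have := hac x hxP
    linarith
  have hB' : p < 1 → q < 1 := by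
    intro hplt
    have hex : ∃ x ∈ Aᶜ, 0 < P x := by
      by_contra h
      push_neg at h
      have : ∑ x ∈ Aᶜ, P x = 0 :=
        Finset.sum_eq_zero (fun x hx => le_antisymm (h x hx) (hP0 x))
      rw [hPc] at this
      linarith
    obtain ⟨x, hxA, hxP⟩ := hex
    have h1 := Finset.single_le_sum (fun y (_ : y ∈ Aᶜ) => hQ0 y) hxA
    rw [hQc] at h1
    have := hac x hxP
    linarith
  have hbin := pinsker_binary p q hp0' hp1' hq0' hq1' hA' hB'
  have hchain : 2 * (p - q) ^ 2 ≤ D := by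
    rw [hDsplit]
    calc 2 * (p - q) ^ 2
        ≤ p * (Real.log p - Real.log q)
            + (1 - p) * (Real.log (1 - p) - Real.log (1 - q)) := hbin
      _ ≤ _ := add_le_add key1 key2
  have hsq : (p - q) ^ 2 ≤ D / 2 := by linarith
  calc |p - q| = Real.sqrt ((p - q) ^ 2) := (Real.sqrt_sq_eq_abs _).symm
    _ ≤ Real.sqrt (D / 2) := Real.sqrt_le_sqrt hsq
end

section
/- KL-divergence bound for a reduced-order Markov model: let A be a finite alphabet, 1 ≤ D < n, and let P and Q be the D-Markov measures on A^n with the same initial distribution μ on A^D and stochastic kernels p and q respectively, where q(w,s) > 0 for every w ∈ A^D and s ∈ A. If κ ≥ 0 satisfies (p(w,s) − q(w,s)) / q(w,s) ≤ κ for all w ∈ A^D and s ∈ A, then D_KL(P‖Q) ≤ (n − D) · κ. -/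
/-- The `D`-Markov measure on `A^n` (sequences indexed by `Fin n`, `0`-indexed)
with initial distribution `μ` on words of length `D` and stochastic kernel `K`:
`P(x) = μ(x_0 … x_{D-1}) · ∏_{i=D}^{n-1} K((x_{i-D},…,x_{i-1}), x_i)`.
(Indices are reduced mod `n`, which is the identity in the relevant range.) -/
def dMarkovMeasure {A : Type*} (D n : ℕ) (hn : 0 < n)
    (μ : (Fin D → A) → ℝ) (K : (Fin D → A) → A → ℝ) (x : Fin n → A) : ℝ :=
  μ (fun j => x ⟨(j : ℕ) % n, Nat.mod_lt _ hn⟩) *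
    ∏ i ∈ Finset.Ico D n,
      K (fun j => x ⟨(i - D + (j : ℕ)) % n, Nat.mod_lt _ hn⟩)
        (x ⟨i % n, Nat.mod_lt _ hn⟩)

section aux

variable {A : Type*} [Fintype A] (D n : ℕ) (hn : 0 < n)
    (μ : (Fin D → A) → ℝ) (K : (Fin D → A) → A → ℝ)

/-- the partial (up to `m`) body of the Markov measure -/
noncomputable def dBody (m : ℕ) (x : Fin n → A) : ℝ :=
  μ (fun j => x ⟨(j : ℕ) % n, Nat.mod_lt _ hn⟩) *
    ∏ i ∈ Finset.Ico D m,
      K (fun j => x ⟨(i - D + (j : ℕ)) % n, Nat.mod_lt _ hn⟩)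
        (x ⟨i % n, Nat.mod_lt _ hn⟩)

lemma dBody_top (x : Fin n → A) :
    dBody D n hn μ K n x = dMarkovMeasure D n hn μ K x := rfl

lemma dBody_congr (m : ℕ) (hDm : D ≤ m) (hmn : m ≤ n)
    (x x' : Fin n → A) (h : ∀ k : Fin n, (k : ℕ) < m → x k = x' k) :
    dBody D n hn μ K m x = dBody D n hn μ K m x' := by
  unfold dBody
  congr 1
  · congr 1
    funext j
    refine h _ ?_
    have hj : (j : ℕ) < D := j.2
    have hmod : (j : ℕ) % n = (j : ℕ) :=
      Nat.mod_eq_of_lt (lt_of_lt_of_le hj (hDm.trans hmn))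
    simpa [hmod] using lt_of_lt_of_le hj hDm
  · refine Finset.prod_congr rfl ?_
    intro i hi
    rw [Finset.mem_Ico] at hi
    have hiD : D ≤ i := hi.1
    have him : i < m := hi.2
    have hin : i < n := lt_of_lt_of_le him hmn
    congr 1
    · funext j
      refine h _ ?_
      have hj : (j : ℕ) < D := j.2
      have hlt : i - D + (j : ℕ) < m := by omega
      simpa [Nat.mod_eq_of_lt (lt_of_lt_of_le hlt hmn)] using hlt
    · exact h _ (by simpa [Nat.mod_eq_of_lt hin] using him)

lemma dBody_base (hDn : D ≤ n) :
    ∑ x : Fin n → A, dBody D n hn μ K D x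
      = (Fintype.card A : ℝ) ^ (n - D) * ∑ w, μ w := by
  have hsum : D + (n - D) = n := by omega
  let e : Fin D ⊕ Fin (n - D) ≃ Fin n := finSumFinEquiv.trans (finCongr hsum)
  let F : (Fin D → A) × (Fin (n - D) → A) ≃ (Fin n → A) :=
    (Equiv.sumArrowEquivProdArrow _ _ A).symm.trans
      (Equiv.arrowCongr e (Equiv.refl A))
  rw [← Equiv.sum_comp F (fun x : Fin n → A => dBody D n hn μ K D x)]
  have hFval : ∀ z : (Fin D → A) × (Fin (n - D) → A),
      dBody D n hn μ K D (F z) = μ z.1 := by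
    rintro ⟨w, v⟩
    unfold dBody
    rw [Finset.Ico_self, Finset.prod_empty, mul_one]
    congr 1
    funext j
    have hj : (j : ℕ) < D := j.2
    have hjn : (j : ℕ) < n := lt_of_lt_of_le hj hDn
    have hmod : (j : ℕ) % n = (j : ℕ) := Nat.mod_eq_of_lt hjn
    have hF : F (w, v) = fun i => Sum.elim w v (e.symm i) := rfl
    rw [hF]
    have he : e.symm ⟨(j : ℕ) % n, Nat.mod_lt _ hn⟩ = Sum.inl j := by
      have h2 : (⟨(j : ℕ) % n, Nat.mod_lt _ hn⟩ : Fin n) = e (Sum.inl j) := by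
        apply Fin.ext
        simp [e, hmod]
      rw [h2, Equiv.symm_apply_apply]
    simp only [he, Sum.elim_inl]
  rw [Fintype.sum_congr _ _ hFval, Fintype.sum_prod_type]
  simp only [Finset.sum_const, Finset.card_univ, nsmul_eq_mul]
  rw [← Finset.mul_sum]
  simp [Fintype.card_fun]

lemma dBody_step [Nonempty A] (hK1 : ∀ w, ∑ s, K w s = 1)
    (m : ℕ) (hDm : D ≤ m) (hmn : m < n) :
    (Fintype.card A : ℝ) * ∑ x : Fin n → A, dBody D n hn μ K (m + 1) x
      = ∑ x : Fin n → A, dBody D n hn μ K m x := by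
  classical
  set M : Fin n := ⟨m, hmn⟩ with hM
  let e := Equiv.funSplitAt M A
  have hcomp : ∀ (g : (Fin n → A) → ℝ),
      ∑ x : Fin n → A, g x = ∑ z : A × ({j : Fin n // j ≠ M} → A), g (e.symm z) :=
    fun g => (Equiv.sum_comp e.symm g).symm
  -- coordinates of e.symm (a, y)
  have hcoord : ∀ (a : A) (y : {j : Fin n // j ≠ M} → A) (k : Fin n) (hk : k ≠ M),
      e.symm (a, y) k = y ⟨k, hk⟩ := by
    intro a y k hk
    simp [e, hk]
  have hcoordM : ∀ (a : A) (y : {j : Fin n // j ≠ M} → A), e.symm (a, y) M = a := by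
    intro a y
    simp [e]
  -- independence of dBody m from the M coordinate
  have hindep : ∀ (a b : A) (y : {j : Fin n // j ≠ M} → A),
      dBody D n hn μ K m (e.symm (a, y)) = dBody D n hn μ K m (e.symm (b, y)) := by
    intro a b y
    refine dBody_congr D n hn μ K m hDm hmn.le _ _ ?_
    intro k hk
    have hkM : k ≠ M := by
      intro hEq
      rw [hEq] at hk
      exact absurd hk (lt_irrefl m)
    rw [hcoord a y k hkM, hcoord b y k hkM]
  -- the window at position m depends only on y
  have hwin : ∀ (a b : A) (y : {j : Fin n // j ≠ M} → A),
      (fun j : Fin D => e.symm (a, y) ⟨(m - D + (j : ℕ)) % n, Nat.mod_lt _ hn⟩)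
        = fun j : Fin D => e.symm (b, y) ⟨(m - D + (j : ℕ)) % n, Nat.mod_lt _ hn⟩ := by
    intro a b y
    funext j
    have hj : (j : ℕ) < D := j.2
    have hlt : m - D + (j : ℕ) < m := by omega
    have hmod : (m - D + (j : ℕ)) % n = m - D + (j : ℕ) :=
      Nat.mod_eq_of_lt (lt_trans hlt hmn)
    have hne : (⟨(m - D + (j : ℕ)) % n, Nat.mod_lt _ hn⟩ : Fin n) ≠ M := by
      intro hEq
      have := congrArg Fin.val hEq
      simp only [hM] at this
      omega
    rw [hcoord a y _ hne, hcoord b y _ hne]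
  -- split dBody (m+1)
  have hsplit : ∀ x : Fin n → A,
      dBody D n hn μ K (m + 1) x = dBody D n hn μ K m x *
        K (fun j : Fin D => x ⟨(m - D + (j : ℕ)) % n, Nat.mod_lt _ hn⟩)
          (x ⟨m % n, Nat.mod_lt _ hn⟩) := by
    intro x
    unfold dBody
    rw [Finset.prod_Ico_succ_top hDm, mul_assoc]
  obtain ⟨a₀⟩ := ‹Nonempty A›
  have hMval : (⟨m % n, Nat.mod_lt _ hn⟩ : Fin n) = M := by
    apply Fin.ext
    simp [hM, Nat.mod_eq_of_lt hmn]
  rw [hcomp (dBody D n hn μ K (m + 1)), hcomp (dBody D n hn μ K m),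
    Fintype.sum_prod_type_right, Fintype.sum_prod_type_right]
  have hinner1 : ∀ y : {j : Fin n // j ≠ M} → A,
      ∑ a : A, dBody D n hn μ K (m + 1) (e.symm (a, y))
        = dBody D n hn μ K m (e.symm (a₀, y)) := by
    intro y
    have : ∀ a : A, dBody D n hn μ K (m + 1) (e.symm (a, y))
        = dBody D n hn μ K m (e.symm (a₀, y)) *
          K (fun j : Fin D => e.symm (a₀, y) ⟨(m - D + (j : ℕ)) % n, Nat.mod_lt _ hn⟩) a := by
      intro a
      rw [hsplit, hindep a a₀ y, hwin a a₀ y, hMval, hcoordM]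
    rw [Fintype.sum_congr _ _ this, ← Finset.mul_sum, hK1, mul_one]
  have hinner2 : ∀ y : {j : Fin n // j ≠ M} → A,
      ∑ a : A, dBody D n hn μ K m (e.symm (a, y))
        = (Fintype.card A : ℝ) * dBody D n hn μ K m (e.symm (a₀, y)) := by
    intro y
    rw [Fintype.sum_congr _ _ (fun a => hindep a a₀ y)]
    simp [Finset.sum_const, Finset.card_univ, nsmul_eq_mul]
  rw [Fintype.sum_congr _ _ hinner1, Fintype.sum_congr _ _ hinner2, ← Finset.mul_sum]

lemma dMarkov_sum_eq_one [Nonempty A] (hDn : D ≤ n)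
    (hμ1 : ∑ w, μ w = 1) (hK1 : ∀ w, ∑ s, K w s = 1) :
    ∑ x : Fin n → A, dMarkovMeasure D n hn μ K x = 1 := by
  have hcard : (0 : ℝ) < (Fintype.card A : ℝ) := by
    exact_mod_cast Fintype.card_pos
  have key : ∀ m, D ≤ m → m ≤ n →
      ∑ x : Fin n → A, dBody D n hn μ K m x = (Fintype.card A : ℝ) ^ (n - m) := by
    intro m hDm
    induction m, hDm using Nat.le_induction with
    | base =>
      intro _
      rw [dBody_base D n hn μ K hDn, hμ1, mul_one]
    | succ m hDm ih =>
      intro hmn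
      have hmn' : m < n := lt_of_lt_of_le (Nat.lt_succ_self m) hmn
      have hstep := dBody_step D n hn μ K hK1 m hDm hmn'
      have hpow : (Fintype.card A : ℝ) ^ (n - m)
          = (Fintype.card A : ℝ) * (Fintype.card A : ℝ) ^ (n - (m + 1)) := by
        have : n - m = (n - (m + 1)) + 1 := by omega
        rw [this, pow_succ]
        ring
      have := ih hmn'.le
      rw [this, hpow] at hstep
      exact mul_left_cancel₀ (ne_of_gt hcard) hstep
  have := key n hDn le_rfl
  simp only [Nat.sub_self, pow_zero] at this
  simpa only [dBody_top] using this

end aux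

/-- **KL-divergence bound for a reduced-order Markov model.** If `P` and `Q` are
`D`-Markov measures on `A^n` with the same initial distribution `μ` and kernels
`p`, `q` respectively (`q` strictly positive), and `κ ≥ 0` satisfies
`(p(w,s) − q(w,s))/q(w,s) ≤ κ` for all words `w` and symbols `s`, then
`D_KL(P‖Q) ≤ (n − D) · κ`. -/
theorem dMarkov_klDiv_le_of_rel_dev_le {A : Type*} [Fintype A] (D n : ℕ)
    (hD : 1 ≤ D) (hDn : D < n)
    (μ : (Fin D → A) → ℝ) (p q : (Fin D → A) → A → ℝ)
    (hμ0 : ∀ w, 0 ≤ μ w) (hμ1 : ∑ w, μ w = 1)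
    (hp0 : ∀ w s, 0 ≤ p w s) (hp1 : ∀ w, ∑ s, p w s = 1)
    (hq0 : ∀ w s, 0 < q w s) (hq1 : ∀ w, ∑ s, q w s = 1)
    (κ : ℝ) (hκ0 : 0 ≤ κ)
    (hκ : ∀ w s, (p w s - q w s) / q w s ≤ κ) :
    (∑ x ∈ Finset.univ.filter
        (fun x : Fin n → A =>
          0 < dMarkovMeasure D n (Nat.lt_of_le_of_lt (Nat.zero_le D) hDn) μ p x),
        dMarkovMeasure D n (Nat.lt_of_le_of_lt (Nat.zero_le D) hDn) μ p x *
          Real.log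
            (dMarkovMeasure D n (Nat.lt_of_le_of_lt (Nat.zero_le D) hDn) μ p x /
             dMarkovMeasure D n (Nat.lt_of_le_of_lt (Nat.zero_le D) hDn) μ q x)) ≤
      ((n : ℝ) - (D : ℝ)) * κ := by
  classical
  set hn := Nat.lt_of_le_of_lt (Nat.zero_le D) hDn with hhn
  -- A is nonempty
  have hA : Nonempty A := by
    by_contra h
    rw [not_nonempty_iff] at h
    have : IsEmpty (Fin D → A) := by
      have : Nonempty (Fin D) := ⟨⟨0, hD⟩⟩
      exact Function.isEmpty (α := Fin D → A) (fun f => f ⟨0, hD⟩)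
    rw [Fintype.sum_empty] at hμ1
    exact one_ne_zero hμ1.symm
  -- notation
  set P := dMarkovMeasure D n hn μ p with hP
  set Q := dMarkovMeasure D n hn μ q with hQ
  have hP0 : ∀ x, 0 ≤ P x := by
    intro x
    exact mul_nonneg (hμ0 _) (Finset.prod_nonneg fun i _ => hp0 _ _)
  -- pointwise log bound
  have hlog : ∀ x : Fin n → A, 0 < P x →
      Real.log (P x / Q x) ≤ ((n : ℝ) - (D : ℝ)) * κ := by
    intro x hPx
    have hμx : 0 < μ (fun j => x ⟨(j : ℕ) % n, Nat.mod_lt _ hn⟩) := by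
      rcases (hμ0 _).lt_or_eq with h | h
      · exact h
      · exfalso
        rw [hP] at hPx
        unfold dMarkovMeasure at hPx
        rw [← h, zero_mul] at hPx
        exact lt_irrefl _ hPx
    have hprod : 0 < ∏ i ∈ Finset.Ico D n,
        p (fun j => x ⟨(i - D + (j : ℕ)) % n, Nat.mod_lt _ hn⟩)
          (x ⟨i % n, Nat.mod_lt _ hn⟩) := by
      have hPx' := hPx
      rw [hP] at hPx'
      unfold dMarkovMeasure at hPx'
      rcases mul_pos_iff.mp hPx' with h | h
      · exact h.2
      · exact absurd h.1 (not_lt.mpr hμx.le)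
    have hpi : ∀ i ∈ Finset.Ico D n,
        0 < p (fun j => x ⟨(i - D + (j : ℕ)) % n, Nat.mod_lt _ hn⟩)
          (x ⟨i % n, Nat.mod_lt _ hn⟩) := by
      intro i hi
      rcases (hp0 _ _).lt_or_eq with h | h
      · exact h
      · exfalso
        rw [← Finset.prod_erase_mul _ _ hi, ← h, mul_zero] at hprod
        exact lt_irrefl _ hprod
    have hratio : P x / Q x = ∏ i ∈ Finset.Ico D n,
        (p (fun j => x ⟨(i - D + (j : ℕ)) % n, Nat.mod_lt _ hn⟩)
          (x ⟨i % n, Nat.mod_lt _ hn⟩) /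
         q (fun j => x ⟨(i - D + (j : ℕ)) % n, Nat.mod_lt _ hn⟩)
          (x ⟨i % n, Nat.mod_lt _ hn⟩)) := by
      rw [hP, hQ]
      unfold dMarkovMeasure
      rw [mul_div_mul_left _ _ (ne_of_gt hμx), Finset.prod_div_distrib]
    rw [hratio, Real.log_prod (s := Finset.Ico D n) (fun i hi =>
      ne_of_gt (div_pos (hpi i hi) (hq0 _ _)))]
    have hterm : ∀ i ∈ Finset.Ico D n,
        Real.log (p (fun j => x ⟨(i - D + (j : ℕ)) % n, Nat.mod_lt _ hn⟩)
            (x ⟨i % n, Nat.mod_lt _ hn⟩) /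
          q (fun j => x ⟨(i - D + (j : ℕ)) % n, Nat.mod_lt _ hn⟩)
            (x ⟨i % n, Nat.mod_lt _ hn⟩)) ≤ κ := by
      intro i hi
      set w := fun j : Fin D => x ⟨(i - D + (j : ℕ)) % n, Nat.mod_lt _ hn⟩
      set s := x ⟨i % n, Nat.mod_lt _ hn⟩
      have h1 : Real.log (p w s / q w s) ≤ p w s / q w s - 1 :=
        Real.log_le_sub_one_of_pos (div_pos (hpi i hi) (hq0 _ _))
      have h2 : p w s / q w s - 1 = (p w s - q w s) / q w s := by
        rw [sub_div, div_self (ne_of_gt (hq0 w s))]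
      rw [h2] at h1
      exact h1.trans (hκ w s)
    calc ∑ i ∈ Finset.Ico D n, Real.log _ ≤ ∑ i ∈ Finset.Ico D n, κ :=
          Finset.sum_le_sum hterm
      _ = ((n : ℝ) - (D : ℝ)) * κ := by
          rw [Finset.sum_const, Nat.card_Ico, nsmul_eq_mul]
          congr 1
          exact_mod_cast Nat.cast_sub hDn.le
  -- total mass
  have hmass : ∑ x : Fin n → A, P x = 1 :=
    dMarkov_sum_eq_one D n hn μ p hDn.le hμ1 hp1
  have hfiltermass : (∑ x ∈ Finset.univ.filter (fun x : Fin n → A => 0 < P x), P x) ≤ 1 := by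
    rw [← hmass]
    exact Finset.sum_le_sum_of_subset_of_nonneg (Finset.filter_subset _ _)
      (fun x _ _ => hP0 x)
  have hRHS : 0 ≤ ((n : ℝ) - (D : ℝ)) * κ := by
    apply mul_nonneg _ hκ0
    have : (D : ℝ) ≤ (n : ℝ) := by exact_mod_cast hDn.le
    linarith
  calc (∑ x ∈ Finset.univ.filter (fun x : Fin n → A => 0 < P x),
          P x * Real.log (P x / Q x))
      ≤ ∑ x ∈ Finset.univ.filter (fun x : Fin n → A => 0 < P x),
          P x * (((n : ℝ) - (D : ℝ)) * κ) := by
        refine Finset.sum_le_sum ?_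
        intro x hx
        rw [Finset.mem_filter] at hx
        exact mul_le_mul_of_nonneg_left (hlog x hx.2) (hP0 x)
    _ = (∑ x ∈ Finset.univ.filter (fun x : Fin n → A => 0 < P x), P x) *
          (((n : ℝ) - (D : ℝ)) * κ) := by rw [Finset.sum_mul]
    _ ≤ 1 * (((n : ℝ) - (D : ℝ)) * κ) :=
          mul_le_mul_of_nonneg_right hfiltermass hRHS
    _ = ((n : ℝ) - (D : ℝ)) * κ := one_mul _
end
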